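/- Any closed loop in the graph of reduced decompositions of a permutation w (vertices: reduced words; edges: single commutations or single braid moves) traverses an even number of commutation edges and an even number of braid-move edges. -/

import Mathlib

/-- The length of a permutation is its number of inversions. -/
def permLen {n : ℕ} (w : Equiv.Perm (Fin n)) : ℕ :=
  (Finset.univ.filter (fun p : Fin n × Fin n => p.1 < p.2 ∧ w p.2 < w p.1)).card

/-- The simple transposition `s_a = (a, a+1)` (0-based) in `S_n`. -/
def simpleT (n : ℕ) (a : ℕ) : Equiv.Perm (Fin n) :=
  if h : a + 1 < n then Equiv.swap ⟨a, Nat.lt_of_succ_lt h⟩ ⟨a + 1, h⟩ else 1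

/-- The kind of a move between reduced words. -/
inductive BWMove where
  | comm : BWMove
  | braid : BWMove
deriving DecidableEq

/-- `applyBWMove m l₁ l₂` holds when the word `l₂` (a list of indices of simple
reflections) is obtained from `l₁` by a single commutation (`s_a s_b → s_b s_a` with
`|a − b| ≥ 2`) or a single braid move (`s_a s_{a+1} s_a ↔ s_{a+1} s_a s_{a+1}`). -/
def applyBWMove : BWMove → List ℕ → List ℕ → Prop
  | .comm, l₁, l₂ => ∃ (pre suf : List ℕ) (a b : ℕ),
      (a + 2 ≤ b ∨ b + 2 ≤ a) ∧
      l₁ = pre ++ a :: b :: suf ∧ l₂ = pre ++ b :: a :: suf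
  | .braid, l₁, l₂ => ∃ (pre suf : List ℕ) (a : ℕ),
      (l₁ = pre ++ a :: (a + 1) :: a :: suf ∧ l₂ = pre ++ (a + 1) :: a :: (a + 1) :: suf) ∨
      (l₁ = pre ++ (a + 1) :: a :: (a + 1) :: suf ∧ l₂ = pre ++ a :: (a + 1) :: a :: suf)


set_option maxHeartbeats 1000000

open Equiv Finset

/-! ### Auxiliary lemmas -/

section Aux

lemma simpleT_sq (n a : ℕ) : simpleT n a * simpleT n a = 1 := by
  unfold simpleT; split_ifs with h
  · exact Equiv.swap_mul_self _ _
  · simp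

lemma simpleT_inv (n a : ℕ) : (simpleT n a)⁻¹ = simpleT n a := by
  rw [inv_eq_iff_mul_eq_one, simpleT_sq]

lemma simpleT_comm {n a b : ℕ} (h : a + 2 ≤ b ∨ b + 2 ≤ a) :
    simpleT n a * simpleT n b = simpleT n b * simpleT n a := by
  unfold simpleT
  split_ifs with h1 h2 h2
  · ext x
    simp only [Equiv.Perm.mul_apply, Equiv.swap_apply_def]
    split_ifs <;> simp only [Fin.ext_iff, not_true, eq_self_iff_true] at * <;> omega
  · simp
  · simp
  · simp

lemma simpleT_braid {n a : ℕ} (h : a + 2 < n) :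
    simpleT n a * simpleT n (a+1) * simpleT n a
      = simpleT n (a+1) * simpleT n a * simpleT n (a+1) := by
  have h1 : a + 1 < n := by omega
  have h2 : a + 1 + 1 < n := by omega
  unfold simpleT
  rw [dif_pos h1, dif_pos h2]
  ext x
  simp only [Equiv.Perm.mul_apply, Equiv.swap_apply_def]
  split_ifs <;> simp only [Fin.ext_iff, not_true, eq_self_iff_true] at * <;> omega

lemma simpleT_app_left {n a : ℕ} (h : a + 1 < n) :
    simpleT n a ⟨a, Nat.lt_of_succ_lt h⟩ = ⟨a + 1, h⟩ := by
  unfold simpleT; rw [dif_pos h]; exact Equiv.swap_apply_left _ _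

lemma simpleT_app_right {n a : ℕ} (h : a + 1 < n) :
    simpleT n a ⟨a + 1, h⟩ = ⟨a, Nat.lt_of_succ_lt h⟩ := by
  unfold simpleT; rw [dif_pos h]; exact Equiv.swap_apply_right _ _

lemma simpleT_app_other {n a : ℕ} {x : Fin n} (h1 : (x : ℕ) ≠ a) (h2 : (x : ℕ) ≠ a + 1) :
    simpleT n a x = x := by
  unfold simpleT; split_ifs with h
  · exact Equiv.swap_apply_of_ne_of_ne (by simp [Fin.ext_iff]; omega) (by simp [Fin.ext_iff]; omega)
  · rfl

lemma conj_ne {G : Type*} [Group G] (u : G) {x y : G} (h : x ≠ y) :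
    u * x * u⁻¹ ≠ u * y * u⁻¹ := by
  intro e
  exact h (mul_left_cancel (mul_right_cancel e))

lemma simpleT_ne_of_far {n a b : ℕ} (ha : a + 1 < n) (hfar : a ≠ b ∧ a ≠ b + 1) :
    simpleT n a ≠ simpleT n b := by
  intro e
  have h1 : simpleT n a ⟨a, Nat.lt_of_succ_lt ha⟩ = ⟨a + 1, ha⟩ := simpleT_app_left ha
  have h2 : simpleT n b ⟨a, Nat.lt_of_succ_lt ha⟩ = ⟨a, Nat.lt_of_succ_lt ha⟩ :=
    simpleT_app_other (by simp [hfar.1]) (by simp [hfar.2])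
  rw [e, h2] at h1
  simp [Fin.ext_iff] at h1

lemma braid_uvu {n a : ℕ} (h : a + 2 < n) :
    simpleT n a ≠ simpleT n a * simpleT n (a+1) * (simpleT n a)⁻¹ ∧
    simpleT n a ≠ simpleT n a * (simpleT n (a+1) * simpleT n a * (simpleT n (a+1))⁻¹) * (simpleT n a)⁻¹ ∧
    simpleT n a * simpleT n (a+1) * (simpleT n a)⁻¹
      ≠ simpleT n a * (simpleT n (a+1) * simpleT n a * (simpleT n (a+1))⁻¹) * (simpleT n a)⁻¹ := by
  set u := simpleT n a with hud
  set v := simpleT n (a+1) with hvd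
  have ha1 : a + 1 < n := by omega
  have ha2 : a + 1 + 1 < n := by omega
  set p : Fin n := ⟨a, by omega⟩ with hp
  have e1 : u p = ⟨a + 1, ha1⟩ := simpleT_app_left ha1
  have e2 : v ⟨a + 1, ha1⟩ = ⟨a + 1 + 1, ha2⟩ := simpleT_app_left ha2
  have e3 : u ⟨a + 1 + 1, ha2⟩ = ⟨a + 1 + 1, ha2⟩ :=
    simpleT_app_other (by simp; omega) (by simp)
  have e4 : v ⟨a + 1 + 1, ha2⟩ = ⟨a + 1, ha1⟩ := simpleT_app_right ha2
  have e5 : u ⟨a + 1, ha1⟩ = p := by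
    have := simpleT_app_right ha1
    convert this using 2
  have hu : u⁻¹ = u := simpleT_inv n a
  have hv : v⁻¹ = v := simpleT_inv n (a+1)
  have B : (u * v * u⁻¹) p = ⟨a + 1 + 1, ha2⟩ := by
    rw [hu]; simp only [Equiv.Perm.mul_apply, e1, e2, e3]
  have C : (u * (v * u * v⁻¹) * u⁻¹) p = p := by
    rw [hu, hv]; simp only [Equiv.Perm.mul_apply, e1, e2, e3, e4, e5]
  refine ⟨?_, ?_, ?_⟩
  · intro e
    have := Equiv.ext_iff.mp e p
    rw [e1, B] at this
    simp [Fin.ext_iff] at this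
  · intro e
    have := Equiv.ext_iff.mp e p
    rw [e1, C] at this
    simp [hp, Fin.ext_iff] at this
  · intro e
    have := Equiv.ext_iff.mp e p
    rw [B, C] at this
    simp [hp, Fin.ext_iff] at this; omega

/-! ### products and prefix reflections -/

def pp (n : ℕ) (l : List ℕ) : Equiv.Perm (Fin n) := (l.map (simpleT n)).prod

lemma pp_nil (n : ℕ) : pp n [] = 1 := rfl
lemma pp_cons (n a : ℕ) (l : List ℕ) : pp n (a :: l) = simpleT n a * pp n l := by
  simp [pp]
lemma pp_append (n : ℕ) (l1 l2 : List ℕ) : pp n (l1 ++ l2) = pp n l1 * pp n l2 := by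
  simp [pp]

def keyF (n : ℕ) (l : List ℕ) (i : ℕ) : Equiv.Perm (Fin n) :=
  pp n (l.take i) * simpleT n (l.getD i 0) * (pp n (l.take i))⁻¹

lemma keyF_append (n : ℕ) (pre X : List ℕ) (t : ℕ) :
    keyF n (pre ++ X) (pre.length + t) = pp n pre * keyF n X t * (pp n pre)⁻¹ := by
  unfold keyF
  rw [List.take_append, List.take_of_length_le (by omega),
    Nat.add_sub_cancel_left,
    List.getD_append_right _ _ _ _ (by omega), Nat.add_sub_cancel_left,
    pp_append, mul_inv_rev]
  group

lemma keyF_prefix (n : ℕ) (pre X : List ℕ) {i : ℕ} (h : i < pre.length) :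
    keyF n (pre ++ X) i = keyF n pre i := by
  unfold keyF
  rw [List.take_append, Nat.sub_eq_zero_of_le (le_of_lt h),
    List.take_zero, List.append_nil, List.getD_append _ _ _ _ h]

lemma keyF_cons (n x : ℕ) (X : List ℕ) (t : ℕ) :
    keyF n (x :: X) (t + 1) = simpleT n x * keyF n X t * (simpleT n x)⁻¹ := by
  have := keyF_append n [x] X t
  simp only [List.length_cons, List.length_nil, List.singleton_append] at this
  rw [show 1 + t = t + 1 by omega] at this
  rw [this, pp_cons, pp_nil, mul_one]

lemma keyF_zero (n x : ℕ) (X : List ℕ) :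
    keyF n (x :: X) 0 = simpleT n x := by
  unfold keyF
  simp only [List.take_zero, List.getD_cons_zero, pp_nil, inv_one, mul_one, one_mul]

lemma conj_conj {G : Type*} [Group G] (u v x : G) (h : u * v = v * u) :
    u * (v * x * v⁻¹) * u⁻¹ = v * (u * x * u⁻¹) * v⁻¹ := by
  have e1 : u * (v * x * v⁻¹) * u⁻¹ = (u * v) * x * (u * v)⁻¹ := by group
  have e2 : v * (u * x * u⁻¹) * v⁻¹ = (v * u) * x * (v * u)⁻¹ := by group
  rw [e1, e2, h]

lemma keyF_comm_move {n a b : ℕ} (hab : a + 2 ≤ b ∨ b + 2 ≤ a) (pre suf : List ℕ) (i : ℕ) :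
    keyF n (pre ++ b :: a :: suf) i
      = keyF n (pre ++ a :: b :: suf) (Equiv.swap pre.length (pre.length + 1) i) := by
  set m := pre.length with hm
  have hcm : simpleT n a * simpleT n b = simpleT n b * simpleT n a := simpleT_comm hab
  have hsab : simpleT n a * simpleT n b * (simpleT n a)⁻¹ = simpleT n b := by
    rw [simpleT_inv, hcm, mul_assoc, simpleT_sq, mul_one]
  have hsba : simpleT n b * simpleT n a * (simpleT n b)⁻¹ = simpleT n a := by
    rw [simpleT_inv, ← hcm, mul_assoc, simpleT_sq, mul_one]
  rcases lt_or_ge i m with h | h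
  · rw [Equiv.swap_apply_of_ne_of_ne (by omega) (by omega),
      keyF_prefix _ _ _ h, keyF_prefix _ _ _ h]
  rcases eq_or_ne i m with rfl | h2
  · rw [Equiv.swap_apply_left]
    have e1 := keyF_append n pre (b :: a :: suf) 0
    have e2 := keyF_append n pre (a :: b :: suf) 1
    simp only [Nat.add_zero] at e1
    rw [← hm] at e1 e2
    rw [e1, e2, keyF_zero, show (1 : ℕ) = 0 + 1 by rfl, keyF_cons, keyF_zero, hsab]
  rcases eq_or_ne i (m + 1) with rfl | h3
  · rw [Equiv.swap_apply_right]
    have e1 := keyF_append n pre (b :: a :: suf) 1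
    have e2 := keyF_append n pre (a :: b :: suf) 0
    simp only [Nat.add_zero] at e2
    rw [← hm] at e1 e2
    rw [e1, e2, keyF_zero, show (1 : ℕ) = 0 + 1 by rfl, keyF_cons, keyF_zero, hsba]
  · obtain ⟨j, rfl⟩ : ∃ j, i = m + (j + 2) := ⟨i - m - 2, by omega⟩
    rw [Equiv.swap_apply_of_ne_of_ne (by omega) (by omega)]
    have e1 := keyF_append n pre (b :: a :: suf) (j + 2)
    have e2 := keyF_append n pre (a :: b :: suf) (j + 2)
    rw [← hm] at e1 e2
    rw [e1, e2]
    congr 1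
    congr 1
    rw [show j + 2 = (j + 1) + 1 by rfl, keyF_cons, keyF_cons, keyF_cons, keyF_cons]
    exact conj_conj _ _ _ hcm.symm

lemma keyF_braid_move {n a : ℕ} (h : a + 2 < n) (pre suf : List ℕ) (i : ℕ) :
    keyF n (pre ++ (a+1) :: a :: (a+1) :: suf) i
      = keyF n (pre ++ a :: (a+1) :: a :: suf) (Equiv.swap pre.length (pre.length + 2) i) := by
  set m := pre.length with hm
  have hbr := simpleT_braid (n := n) h
  set u := simpleT n a with hu
  set v := simpleT n (a+1) with hv
  have hui : u⁻¹ = u := simpleT_inv n a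
  have hvi : v⁻¹ = v := simpleT_inv n (a+1)
  have huu : u * u = 1 := simpleT_sq n a
  have hvv : v * v = 1 := simpleT_sq n (a+1)
  rcases lt_or_ge i m with hlt | hge
  · rw [Equiv.swap_apply_of_ne_of_ne (by omega) (by omega),
      keyF_prefix _ _ _ hlt, keyF_prefix _ _ _ hlt]
  rcases eq_or_ne i m with rfl | h2
  · rw [Equiv.swap_apply_left]
    have e1 := keyF_append n pre ((a+1) :: a :: (a+1) :: suf) 0
    have e2 := keyF_append n pre (a :: (a+1) :: a :: suf) 2
    simp only [Nat.add_zero] at e1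
    rw [← hm] at e1 e2
    rw [e1, e2, keyF_zero,
      show (2 : ℕ) = 1 + 1 by rfl, keyF_cons,
      show (1 : ℕ) = 0 + 1 by rfl, keyF_cons, keyF_zero]
    congr 1
    congr 1
    rw [hui, hvi]
    calc v = u * u * v * (u * u) := by rw [huu]; group
    _ = u * (u * v * u) * u := by group
    _ = u * (v * u * v) * u := by
          have : u * v * u = v * u * v := hbr
          rw [this]
  rcases eq_or_ne i (m + 1) with rfl | h3
  · rw [Equiv.swap_apply_of_ne_of_ne (by omega) (by omega)]
    have e1 := keyF_append n pre ((a+1) :: a :: (a+1) :: suf) 1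
    have e2 := keyF_append n pre (a :: (a+1) :: a :: suf) 1
    rw [← hm] at e1 e2
    rw [e1, e2, show (1 : ℕ) = 0 + 1 by rfl, keyF_cons, keyF_cons, keyF_zero, keyF_zero]
    congr 1
    congr 1
    rw [hui, hvi]
    exact hbr.symm
  rcases eq_or_ne i (m + 2) with rfl | h4
  · rw [Equiv.swap_apply_right]
    have e1 := keyF_append n pre ((a+1) :: a :: (a+1) :: suf) 2
    have e2 := keyF_append n pre (a :: (a+1) :: a :: suf) 0
    simp only [Nat.add_zero] at e2
    rw [← hm] at e1 e2
    rw [e1, e2, keyF_zero,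
      show (2 : ℕ) = 1 + 1 by rfl, keyF_cons,
      show (1 : ℕ) = 0 + 1 by rfl, keyF_cons, keyF_zero]
    congr 1
    congr 1
    rw [hui, hvi]
    calc v * (u * v * u) * v = v * (v * u * v) * v := by rw [hbr]
    _ = (v * v) * u * (v * v) := by group
    _ = u := by rw [hvv]; group
  · obtain ⟨j, rfl⟩ : ∃ j, i = m + (j + 3) := ⟨i - m - 3, by omega⟩
    rw [Equiv.swap_apply_of_ne_of_ne (by omega) (by omega)]
    have e1 := keyF_append n pre ((a+1) :: a :: (a+1) :: suf) (j + 3)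
    have e2 := keyF_append n pre (a :: (a+1) :: a :: suf) (j + 3)
    rw [← hm] at e1 e2
    rw [e1, e2]
    congr 1
    congr 1
    rw [show j + 3 = ((j + 1) + 1) + 1 by rfl, keyF_cons, keyF_cons, keyF_cons,
      keyF_cons, keyF_cons, keyF_cons]
    set X := keyF n suf j
    have lhs : v * (u * (v * X * v⁻¹) * u⁻¹) * v⁻¹ = (v * u * v) * X * (v * u * v)⁻¹ := by
      group
    have rhs : u * (v * (u * X * u⁻¹) * v⁻¹) * u⁻¹ = (u * v * u) * X * (u * v * u)⁻¹ := by
      group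
    rw [lhs, rhs, ← hbr]

/-! ### the rank function and the inversion-parity invariant -/

noncomputable def rk {n : ℕ} (σ : Equiv.Perm (Fin n)) : ℕ :=
  (Fintype.equivFin (Equiv.Perm (Fin n)) σ : ℕ)

lemma rk_ne {n : ℕ} {σ τ : Equiv.Perm (Fin n)} (h : σ ≠ τ) : rk σ ≠ rk τ := by
  intro e
  exact h ((Fintype.equivFin (Equiv.Perm (Fin n))).injective (Fin.val_injective e))

noncomputable def Pinv (n : ℕ) (l : List ℕ) : ZMod 2 :=
  ∑ x ∈ Finset.range l.length ×ˢ Finset.range l.length,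
    if x.1 < x.2 ∧ rk (keyF n l x.2) < rk (keyF n l x.1) then 1 else 0

lemma swap_stable {k m d : ℕ} (hm : m + d < k) {i : ℕ} (hi : i < k) :
    Equiv.swap m (m + d) i < k := by
  rcases eq_or_ne i m with rfl | h1
  · rw [Equiv.swap_apply_left]; omega
  rcases eq_or_ne i (m + d) with rfl | h2
  · rw [Equiv.swap_apply_right]; omega
  · rw [Equiv.swap_apply_of_ne_of_ne h1 h2]; exact hi

lemma inv_flip {K : ℕ → ℕ} {k m d : ℕ} (hd : d = 1 ∨ d = 2) (hm : m + d < k)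
    (hne : ∀ i j, m ≤ i → i < j → j ≤ m + d → K i ≠ K j) :
    (∑ x ∈ Finset.range k ×ˢ Finset.range k,
        if x.1 < x.2 ∧ K (Equiv.swap m (m+d) x.2) < K (Equiv.swap m (m+d) x.1)
        then (1 : ZMod 2) else 0)
    = (∑ x ∈ Finset.range k ×ˢ Finset.range k,
        if x.1 < x.2 ∧ K x.2 < K x.1 then (1 : ZMod 2) else 0) + 1 := by
  set σ := Equiv.swap m (m+d) with hσ
  have hinv : ∀ i, σ (σ i) = i := fun i => Equiv.swap_apply_self _ _ _
  have hre : (∑ x ∈ Finset.range k ×ˢ Finset.range k,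
        if x.1 < x.2 ∧ K (σ x.2) < K (σ x.1) then (1 : ZMod 2) else 0)
      = (∑ x ∈ Finset.range k ×ˢ Finset.range k,
        if σ x.1 < σ x.2 ∧ K x.2 < K x.1 then (1 : ZMod 2) else 0) := by
    refine (Finset.sum_equiv (σ.prodCongr σ) ?_ ?_).symm
    · intro x
      simp only [Finset.mem_product, Finset.mem_range, Equiv.prodCongr_apply, Prod.map]
      constructor
      · rintro ⟨h1, h2⟩; exact ⟨swap_stable hm h1, swap_stable hm h2⟩
      · rintro ⟨h1, h2⟩
        constructor
        · have := swap_stable hm h1; rwa [hinv] at this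
        · have := swap_stable hm h2; rwa [hinv] at this
    · intro x _
      simp only [Equiv.prodCongr_apply, Prod.map, hinv]
  rw [hre]
  have hvalT : ∀ i, i < m ∨ m + d < i → σ i = i := by
    intro i hi
    exact Equiv.swap_apply_of_ne_of_ne (by omega) (by omega)
  have hvalIn : ∀ i, m ≤ i → i ≤ m + d → m ≤ σ i ∧ σ i ≤ m + d := by
    intro i h1 h2
    rcases eq_or_ne i m with rfl | hi1
    · rw [Equiv.swap_apply_left]; omega
    rcases eq_or_ne i (m + d) with rfl | hi2
    · rw [Equiv.swap_apply_right]; omega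
    · rw [Equiv.swap_apply_of_ne_of_ne hi1 hi2]; omega
  have horder : ∀ i j : ℕ, ¬(m ≤ i ∧ i ≤ m + d ∧ m ≤ j ∧ j ≤ m + d) →
      (σ i < σ j ↔ i < j) := by
    intro i j hij
    by_cases hi : m ≤ i ∧ i ≤ m + d
    · have hj : j < m ∨ m + d < j := by omega
      have := hvalIn i hi.1 hi.2
      rw [hvalT j hj]; omega
    · have hi' : i < m ∨ m + d < i := by omega
      rw [hvalT i hi']
      by_cases hj : m ≤ j ∧ j ≤ m + d
      · have := hvalIn j hj.1 hj.2; omega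
      · rw [hvalT j (by omega)]
  have hchar : ∀ x y : ZMod 2, x + y = 1 → x = y + 1 := by decide
  apply hchar
  rw [← Finset.sum_add_distrib]
  have hsupp : ∀ x ∈ Finset.range k ×ˢ Finset.range k,
      ((if σ x.1 < σ x.2 ∧ K x.2 < K x.1 then (1 : ZMod 2) else 0)
        + if x.1 < x.2 ∧ K x.2 < K x.1 then (1 : ZMod 2) else 0) ≠ 0 →
      (x.1 ∈ Finset.Icc m (m + d) ∧ x.2 ∈ Finset.Icc m (m + d)) := by
    intro x _ hx
    by_contra hmem
    simp only [Finset.mem_Icc] at hmem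
    simp only [horder x.1 x.2 (by omega)] at hx
    exact hx (CharTwo.add_self_eq_zero _)
  rw [← Finset.sum_filter_of_ne hsupp]
  have hfil : (Finset.range k ×ˢ Finset.range k).filter
      (fun x => x.1 ∈ Finset.Icc m (m + d) ∧ x.2 ∈ Finset.Icc m (m + d))
      = Finset.Icc m (m + d) ×ˢ Finset.Icc m (m + d) := by
    ext x
    simp only [Finset.mem_filter, Finset.mem_product, Finset.mem_range, Finset.mem_Icc]
    omega
  rw [hfil]
  rcases hd with rfl | rfl
  · have hIcc : Finset.Icc m (m+1) = {m, m+1} := by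
      ext x; simp only [Finset.mem_Icc, Finset.mem_insert, Finset.mem_singleton]; omega
    have hσl : σ m = m + 1 := Equiv.swap_apply_left _ _
    have hσr : σ (m+1) = m := Equiv.swap_apply_right _ _
    have nm : m ∉ ({m+1} : Finset ℕ) := by simp
    rw [hIcc, Finset.sum_product]
    simp only [Finset.sum_insert nm, Finset.sum_singleton]
    rcases lt_or_gt_of_ne (hne m (m+1) le_rfl (by omega) le_rfl) with hc | hc <;>
      simp [hσl, hσr, hc, not_lt_of_gt hc, Nat.lt_irrefl, show ¬(m + 1 < m) by omega,
        show m < m + 1 by omega]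
  · have hIcc : Finset.Icc m (m+2) = {m, m+1, m+2} := by
      ext x
      simp only [Finset.mem_Icc, Finset.mem_insert, Finset.mem_singleton]; omega
    have hσl : σ m = m + 2 := Equiv.swap_apply_left _ _
    have hσr : σ (m+2) = m := Equiv.swap_apply_right _ _
    have hσm : σ (m+1) = m + 1 := Equiv.swap_apply_of_ne_of_ne (by omega) (by omega)
    have nm : m ∉ ({m+1, m+2} : Finset ℕ) := by simp
    have nm2 : (m+1) ∉ ({m+2} : Finset ℕ) := by simp
    rw [hIcc, Finset.sum_product]
    simp only [Finset.sum_insert nm, Finset.sum_insert nm2, Finset.sum_singleton]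
    have h01 := hne m (m+1) le_rfl (by omega) (by omega)
    have h02 := hne m (m+2) le_rfl (by omega) le_rfl
    have h12 := hne (m+1) (m+2) (by omega) (by omega) le_rfl
    rcases lt_or_gt_of_ne h01 with hc1 | hc1 <;>
    rcases lt_or_gt_of_ne h02 with hc2 | hc2 <;>
    rcases lt_or_gt_of_ne h12 with hc3 | hc3 <;>
      simp [hσl, hσr, hσm, hc1, hc2, hc3, not_lt_of_gt, not_lt_of_gt hc1,
        not_lt_of_gt hc2, not_lt_of_gt hc3, Nat.lt_irrefl,
        show ¬(m + 1 < m) by omega, show m < m + 1 by omega, show m < m + 2 by omega,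
        show ¬(m + 2 < m) by omega, show m + 1 < m + 2 by omega, show ¬(m + 2 < m + 1) by omega,
        lt_asymm] <;>
      decide

lemma comm_keys_ne {n a b : ℕ} (ha : a + 1 < n) (hb : b + 1 < n)
    (hab : a + 2 ≤ b ∨ b + 2 ≤ a) (pre suf : List ℕ) :
    keyF n (pre ++ a :: b :: suf) pre.length
      ≠ keyF n (pre ++ a :: b :: suf) (pre.length + 1) := by
  have e1 := keyF_append n pre (a :: b :: suf) 0
  have e2 := keyF_append n pre (a :: b :: suf) 1
  simp only [Nat.add_zero] at e1
  rw [e1, e2, keyF_zero, show (1 : ℕ) = 0 + 1 by rfl, keyF_cons, keyF_zero]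
  apply conj_ne
  have hne : simpleT n a ≠ simpleT n b := simpleT_ne_of_far ha ⟨by omega, by omega⟩
  have := conj_ne (simpleT n a) hne
  simpa [mul_inv_cancel_right] using this

lemma braid_keys_ne {n a : ℕ} (h : a + 2 < n) (pre suf : List ℕ) :
    (keyF n (pre ++ a :: (a+1) :: a :: suf) pre.length
      ≠ keyF n (pre ++ a :: (a+1) :: a :: suf) (pre.length + 1)) ∧
    (keyF n (pre ++ a :: (a+1) :: a :: suf) pre.length
      ≠ keyF n (pre ++ a :: (a+1) :: a :: suf) (pre.length + 2)) ∧
    (keyF n (pre ++ a :: (a+1) :: a :: suf) (pre.length + 1)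
      ≠ keyF n (pre ++ a :: (a+1) :: a :: suf) (pre.length + 2)) := by
  have e0 := keyF_append n pre (a :: (a+1) :: a :: suf) 0
  have e1 := keyF_append n pre (a :: (a+1) :: a :: suf) 1
  have e2 := keyF_append n pre (a :: (a+1) :: a :: suf) 2
  simp only [Nat.add_zero] at e0
  rw [e0, e1, e2, keyF_zero,
    show (2 : ℕ) = 1 + 1 by rfl, keyF_cons,
    show (1 : ℕ) = 0 + 1 by rfl, keyF_cons, keyF_cons, keyF_zero, keyF_zero]
  obtain ⟨n1, n2, n3⟩ := braid_uvu (n := n) h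
  exact ⟨conj_ne _ n1, conj_ne _ n2, conj_ne _ n3⟩

lemma Pinv_comm_move {n a b : ℕ} (ha : a + 1 < n) (hb : b + 1 < n)
    (hab : a + 2 ≤ b ∨ b + 2 ≤ a) (pre suf : List ℕ) :
    Pinv n (pre ++ b :: a :: suf) = Pinv n (pre ++ a :: b :: suf) + 1 := by
  unfold Pinv
  have hlen : (pre ++ b :: a :: suf).length = (pre ++ a :: b :: suf).length := by simp
  rw [hlen]
  simp only [keyF_comm_move hab pre suf]
  refine inv_flip (K := fun i => rk (keyF n (pre ++ a :: b :: suf) i)) (d := 1)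
    (Or.inl rfl) (by simp only [List.length_append, List.length_cons]; omega) ?_
  intro i j h1 h2 h3
  have : i = pre.length ∧ j = pre.length + 1 := by omega
  obtain ⟨rfl, rfl⟩ := this
  exact rk_ne (comm_keys_ne ha hb hab pre suf)

lemma Pinv_braid_move {n a : ℕ} (h : a + 2 < n) (pre suf : List ℕ) :
    Pinv n (pre ++ (a+1) :: a :: (a+1) :: suf)
      = Pinv n (pre ++ a :: (a+1) :: a :: suf) + 1 := by
  unfold Pinv
  have hlen : (pre ++ (a+1) :: a :: (a+1) :: suf).length
      = (pre ++ a :: (a+1) :: a :: suf).length := by simp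
  rw [hlen]
  simp only [keyF_braid_move h pre suf]
  obtain ⟨n1, n2, n3⟩ := braid_keys_ne h pre suf
  refine inv_flip (K := fun i => rk (keyF n (pre ++ a :: (a+1) :: a :: suf) i)) (d := 2)
    (Or.inr rfl) (by simp only [List.length_append, List.length_cons]; omega) ?_
  intro i j h1 h2 h3
  have : (i = pre.length ∧ j = pre.length + 1) ∨ (i = pre.length ∧ j = pre.length + 2)
      ∨ (i = pre.length + 1 ∧ j = pre.length + 2) := by omega
  rcases this with ⟨rfl, rfl⟩ | ⟨rfl, rfl⟩ | ⟨rfl, rfl⟩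
  · exact rk_ne n1
  · exact rk_ne n2
  · exact rk_ne n3

/-! ### permLen bounds: reduced words have all letters in range -/

lemma swap_lt_cases {n a : ℕ} (h : a + 1 < n) {x y : Fin n}
    (hlt : Equiv.swap (⟨a, Nat.lt_of_succ_lt h⟩ : Fin n) ⟨a+1, h⟩ x
         < Equiv.swap (⟨a, Nat.lt_of_succ_lt h⟩ : Fin n) ⟨a+1, h⟩ y) :
    x < y ∨ (x = ⟨a+1, h⟩ ∧ y = ⟨a, Nat.lt_of_succ_lt h⟩) := by
  simp only [Equiv.swap_apply_def] at hlt
  split_ifs at hlt <;>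
    simp only [Fin.lt_def, Fin.ext_iff, not_true, eq_self_iff_true] at * <;> omega

lemma permLen_simpleT_mul_le {n a : ℕ} (v : Equiv.Perm (Fin n)) :
    permLen (simpleT n a * v) ≤ (if a + 1 < n then 1 else 0) + permLen v := by
  by_cases h : a + 1 < n
  · rw [if_pos h]
    unfold permLen simpleT
    rw [dif_pos h]
    set i : Fin n := ⟨a, Nat.lt_of_succ_lt h⟩
    set j : Fin n := ⟨a+1, h⟩
    have hsub : (Finset.univ.filter
        (fun p : Fin n × Fin n => p.1 < p.2 ∧ (Equiv.swap i j * v) p.2 < (Equiv.swap i j * v) p.1))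
        ⊆ insert (v⁻¹ i, v⁻¹ j)
          (Finset.univ.filter (fun p : Fin n × Fin n => p.1 < p.2 ∧ v p.2 < v p.1)) := by
      intro p hp
      replace hp := Finset.mem_filter.mp hp
      simp only [Finset.mem_filter, Finset.mem_univ, true_and, Equiv.Perm.mul_apply] at hp
      rcases swap_lt_cases h hp.2 with h2 | ⟨h2, h3⟩
      · exact Finset.mem_insert_of_mem (by simp [hp.1, h2])
      · have hp1 : p.1 = v⁻¹ i := v.injective (by rw [show v (v⁻¹ i) = i from v.apply_symm_apply i]; exact h3)
        have hp2 : p.2 = v⁻¹ j := v.injective (by rw [show v (v⁻¹ j) = j from v.apply_symm_apply j]; exact h2)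
        have : p = (v⁻¹ i, v⁻¹ j) := Prod.ext hp1 hp2
        rw [this]; exact Finset.mem_insert_self _ _
    have := (Finset.card_le_card hsub).trans (Finset.card_insert_le _ _)
    omega
  · rw [if_neg h]
    unfold simpleT
    rw [dif_neg h, one_mul]
    omega

lemma permLen_one (n : ℕ) : permLen (1 : Equiv.Perm (Fin n)) = 0 := by
  unfold permLen
  rw [Finset.card_eq_zero, Finset.filter_eq_empty_iff]
  intro p _
  rintro ⟨h1, h2⟩
  simp only [Equiv.Perm.one_apply] at h2
  exact absurd (h1.trans h2) (lt_irrefl _)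

lemma permLen_prod_le (n : ℕ) (l : List ℕ) :
    permLen ((l.map (simpleT n)).prod) ≤ l.countP (fun a => a + 1 < n) := by
  induction l with
  | nil => simp [permLen_one]
  | cons a l ih =>
    rw [List.map_cons, List.prod_cons, List.countP_cons]
    have h1 := permLen_simpleT_mul_le (a := a) ((l.map (simpleT n)).prod)
    have e : (if (decide (a + 1 < n)) = true then 1 else 0)
        = if a + 1 < n then 1 else 0 := by simp
    rw [e]
    split_ifs at h1 ⊢ <;> omega

lemma reduced_letters {n : ℕ} {w : Equiv.Perm (Fin n)} {l : List ℕ}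
    (hprod : (l.map (simpleT n)).prod = w) (hlen : l.length = permLen w) :
    ∀ a ∈ l, a + 1 < n := by
  have h1 := permLen_prod_le n l
  rw [hprod, ← hlen] at h1
  have h2 := List.countP_le_length (p := fun a => decide (a + 1 < n)) (l := l)
  have h3 : l.countP (fun a => decide (a + 1 < n)) = l.length := by omega
  intro a ha
  have := List.countP_eq_length.mp h3 a ha
  simpa using this

lemma count_comm_add_count_braid (l : List BWMove) :
    l.count BWMove.comm + l.count BWMove.braid = l.length := by
  induction l with
  | nil => simp
  | cons x l ih =>
    cases x <;> simp [List.count_cons] <;> omega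

end Aux

/-- Any closed loop in the graph of reduced decompositions of `w` (vertices: reduced
words, edges: single commutations or single braid moves) traverses an even number of
commutation edges and an even number of braid-move edges. -/
theorem loop_even_moves {n : ℕ} (w : Equiv.Perm (Fin n)) (ms : List BWMove)
    (ws : ℕ → List ℕ)
    (hloop : ws ms.length = ws 0)
    (hred : ∀ t ≤ ms.length,
      ((ws t).map (simpleT n)).prod = w ∧ (ws t).length = permLen w)
    (hstep : ∀ t : ℕ, ∀ ht : t < ms.length,
      applyBWMove (ms.get ⟨t, ht⟩) (ws t) (ws (t + 1))) :
    Even (ms.count BWMove.comm) ∧ Even (ms.count BWMove.braid) := by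
  classical
  set k := ms.length with hk
  have step : ∀ t, ∀ ht : t < k,
      Pinv n (ws (t+1)) = Pinv n (ws t) + 1 ∧
      (((ws (t+1)).sum : ZMod 2) = ((ws t).sum : ZMod 2)
          + if ms.get ⟨t, ht⟩ = BWMove.braid then 1 else 0) := by
    intro t ht
    have hred1 := (hred t (le_of_lt ht)).1
    have hred2 := (hred t (le_of_lt ht)).2
    have hlet : ∀ x ∈ ws t, x + 1 < n := reduced_letters hred1 hred2
    have hs := hstep t ht
    cases hget : ms.get ⟨t, ht⟩ with
    | comm =>
      rw [hget] at hs
      obtain ⟨pre, suf, a, b, hab, h1, h2⟩ := hs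
      have ha : a + 1 < n := hlet a (by rw [h1]; simp)
      have hb : b + 1 < n := hlet b (by rw [h1]; simp)
      constructor
      · rw [h1, h2]; exact Pinv_comm_move ha hb hab pre suf
      · rw [if_neg (by simp [hget])]
        rw [h1, h2, add_zero]
        have : (pre ++ b :: a :: suf).sum = (pre ++ a :: b :: suf).sum := by
          simp [List.sum_append]; omega
        rw [this]
    | braid =>
      rw [hget] at hs
      obtain ⟨pre, suf, a, hcase⟩ := hs
      rw [if_pos rfl]
      rcases hcase with ⟨h1, h2⟩ | ⟨h1, h2⟩
      · have ha : (a + 1) + 1 < n := hlet (a+1) (by rw [h1]; simp)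
        constructor
        · rw [h1, h2]; exact Pinv_braid_move (by omega) pre suf
        · rw [h1, h2]
          have : (pre ++ (a+1) :: a :: (a+1) :: suf).sum
              = (pre ++ a :: (a+1) :: a :: suf).sum + 1 := by
            simp [List.sum_append]; omega
          rw [this, Nat.cast_add, Nat.cast_one]
      · have ha : (a + 1) + 1 < n := hlet (a+1) (by rw [h1]; simp)
        constructor
        · rw [h1, h2]
          have hPB := Pinv_braid_move (n := n) (by omega : a + 2 < n) pre suf
          have hflip : ∀ x y : ZMod 2, x = y + 1 → y = x + 1 := by decide
          exact hflip _ _ hPB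
        · rw [h1, h2]
          have hsum : (pre ++ (a+1) :: a :: (a+1) :: suf).sum
              = (pre ++ a :: (a+1) :: a :: suf).sum + 1 := by
            simp [List.sum_append]; omega
          have z2 : ∀ x : ZMod 2, x + 1 + 1 = x := by decide
          rw [hsum, Nat.cast_add, Nat.cast_one, z2]
  have inv : ∀ t, t ≤ k → Pinv n (ws t) = Pinv n (ws 0) + (t : ZMod 2) ∧
      ((ws t).sum : ZMod 2) = ((ws 0).sum : ZMod 2)
        + ((ms.take t).count BWMove.braid : ZMod 2) := by
    intro t
    induction t with
    | zero => intro _; simp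
    | succ t ih =>
      intro h
      have ht : t < k := by omega
      obtain ⟨ih1, ih2⟩ := ih (by omega)
      obtain ⟨s1, s2⟩ := step t ht
      constructor
      · rw [s1, ih1]; push_cast; ring
      · rw [s2, ih2]
        have htake : ms.take (t+1) = ms.take t ++ [ms.get ⟨t, ht⟩] := by
          rw [List.take_succ]
          congr
          rw [List.getElem?_eq_getElem ht]
          rfl
        rw [htake, List.count_append]
        cases hget : ms.get ⟨t, ht⟩ <;>
          simp [hget, List.count_cons] <;> push_cast <;> ring
  obtain ⟨p1, p2⟩ := inv k le_rfl
  rw [hloop] at p1 p2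
  have hk0 : (k : ZMod 2) = 0 := left_eq_add.mp p1
  have hb0 : ((ms.take k).count BWMove.braid : ZMod 2) = 0 := left_eq_add.mp p2
  have htk : ms.take k = ms := by rw [hk]; exact List.take_length
  rw [htk] at hb0
  have hkdvd : 2 ∣ k := (ZMod.natCast_eq_zero_iff k 2).mp hk0
  have hbdvd : 2 ∣ ms.count BWMove.braid :=
    (ZMod.natCast_eq_zero_iff _ 2).mp hb0
  have hsplit := count_comm_add_count_braid ms
  rw [← hk] at hsplit
  constructor
  · obtain ⟨c1, hc1⟩ := hkdvd
    obtain ⟨c2, hc2⟩ := hbdvd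
    exact ⟨c1 - c2, by omega⟩
  · obtain ⟨c2, hc2⟩ := hbdvd
    exact ⟨c2, by omega⟩
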